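/- Uniqueness (Shapley characterization): if a value Φ : G(N) → ℝ^N satisfies efficiency (Σ_i Φ_i(δ) = δ(N)), the null player property (Φ_i(δ) = 0 whenever δ(S ∪ {i}) = δ(S) for all S), symmetry (Φ_i(δ) = Φ_j(δ) whenever δ(S ∪ {i}) = δ(S ∪ {j}) for all S ⊆ N \ {i,j}), and additivity (Φ(δ + γ) = Φ(δ) + Φ(γ)), then Φ is the Shapley value. -/

import Mathlib

open Finset

section helpers
variable {ι : Type*} [Fintype ι] [DecidableEq ι]

private lemma key_nat (m s : ℕ) :
    (s + 1) * ∑ k ∈ range (m + 1), m.choose k * ((k + s).factorial * (m - k).factorial)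
      = (m + s + 1).factorial := by
  have h1 : ∀ k ∈ range (m + 1),
      m.choose k * ((k + s).factorial * (m - k).factorial)
        = (k + s).choose s * (s.factorial * m.factorial) := by
    intro k hk
    rw [mem_range, Nat.lt_succ_iff] at hk
    have e1 : (k + s).choose s * s.factorial * k.factorial = (k + s).factorial := by
      simpa [Nat.add_sub_cancel] using
        Nat.choose_mul_factorial_mul_factorial (Nat.le_add_left s k)
    have e2 : m.choose k * k.factorial * (m - k).factorial = m.factorial :=
      Nat.choose_mul_factorial_mul_factorial hk
    calc m.choose k * ((k + s).factorial * (m - k).factorial)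
        = ((k + s).choose s * s.factorial * k.factorial) * m.choose k * (m - k).factorial := by
          rw [e1]; ring
      _ = (k + s).choose s * s.factorial * (m.choose k * k.factorial * (m - k).factorial) := by
          ring
      _ = (k + s).choose s * (s.factorial * m.factorial) := by rw [e2]; ring
  rw [Finset.sum_congr rfl h1, ← Finset.sum_mul, Nat.sum_range_add_choose m s]
  have := Nat.choose_mul_factorial_mul_factorial
    (show s + 1 ≤ m + s + 1 by omega)
  have hms : m + s + 1 - (s + 1) = m := by omega
  rw [hms] at this
  calc (s + 1) * ((m + s + 1).choose (s + 1) * (s.factorial * m.factorial))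
      = (m + s + 1).choose (s + 1) * ((s + 1) * s.factorial) * m.factorial := by ring
    _ = (m + s + 1).choose (s + 1) * (s + 1).factorial * m.factorial := by
        rw [Nat.factorial_succ]
    _ = (m + s + 1).factorial := this

private lemma sum_between {M : Type*} [AddCommMonoid M] (B U : Finset ι) (hBU : B ⊆ U)
    (f : Finset ι → M) :
    ∑ S ∈ U.powerset.filter (fun S => B ⊆ S), f S = ∑ V ∈ (U \ B).powerset, f (V ∪ B) := by
  refine sum_nbij' (fun S => S \ B) (fun V => V ∪ B) ?_ ?_ ?_ ?_ ?_
  · intro S hS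
    simp only [mem_filter, mem_powerset] at hS ⊢
    exact sdiff_subset_sdiff hS.1 Subset.rfl
  · intro V hV
    simp only [mem_powerset] at hV
    simp only [mem_filter, mem_powerset]
    exact ⟨union_subset (hV.trans sdiff_subset) hBU, subset_union_right⟩
  · intro S hS
    simp only [mem_filter, mem_powerset] at hS
    exact sdiff_union_of_subset hS.2
  · intro V hV
    simp only [mem_powerset] at hV
    have hdisj : Disjoint V B := sdiff_disjoint.mono_left hV
    show (V ∪ B) \ B = V
    rw [union_sdiff_right, sdiff_eq_self_of_disjoint hdisj]
  · intro S hS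
    simp only [mem_filter, mem_powerset] at hS
    rw [sdiff_union_of_subset hS.2]

end helpers

noncomputable def shapley {ι : Type*} [Fintype ι] [DecidableEq ι]
    (δ : Finset ι → ℝ) (i : ι) : ℝ :=
  ∑ S ∈ (Finset.univ.erase i).powerset,
    ((S.card.factorial * (Fintype.card ι - S.card - 1).factorial : ℝ) /
      (Fintype.card ι).factorial) * (δ (insert i S) - δ S)

section main
variable {ι : Type*} [Fintype ι] [DecidableEq ι]

private def una (T : Finset ι) (c : ℝ) : Finset ι → ℝ := fun S => if T ⊆ S then c else 0

private lemma shapley_una (T : Finset ι) (c : ℝ) (i : ι) :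
    shapley (una T c) i = if i ∈ T then c / T.card else 0 := by
  by_cases hi : i ∈ T
  · rw [if_pos hi]
    set n := Fintype.card ι with hn
    have htpos : 0 < T.card := card_pos.2 ⟨i, hi⟩
    have htn : T.card ≤ n := card_le_card (subset_univ T)
    set B := T.erase i with hB
    set U := (univ : Finset ι).erase i with hU
    have hBU : B ⊆ U := erase_subset_erase i (subset_univ T)
    have hcardB : B.card = T.card - 1 := card_erase_of_mem hi
    have hcardU : U.card = n - 1 := by rw [hU, card_erase_of_mem (mem_univ i), card_univ]
    -- rewrite each term
    have step1 : shapley (una T c) i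
        = ∑ S ∈ U.powerset, (if B ⊆ S then
            ((S.card.factorial * (n - S.card - 1).factorial : ℝ) / n.factorial) * c else 0) := by
      unfold shapley
      refine Finset.sum_congr rfl fun S hS => ?_
      rw [mem_powerset] at hS
      have hiS : i ∉ S := fun h => (mem_erase.1 (hS h)).1 rfl
      have h1 : una T c (insert i S) = if B ⊆ S then c else 0 := by
        unfold una
        simp only [subset_insert_iff, hB]
      have h2 : una T c S = 0 := by
        unfold una
        rw [if_neg fun h => hiS (h hi)]
      rw [h1, h2]
      by_cases hb : B ⊆ S <;> simp [hb, hn]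
    rw [step1, ← Finset.sum_filter, sum_between B U hBU]
    set s := T.card - 1 with hs
    set M := (U \ B).card with hM
    have hMc : M = n - T.card := by
      rw [hM, card_sdiff_of_subset hBU, hcardU, hcardB]; omega
    have hns : n = M + s + 1 := by omega
    have hVcard : ∀ V ∈ (U \ B).powerset,
        ((V ∪ B).card.factorial * (n - (V ∪ B).card - 1).factorial : ℝ) / n.factorial * c
          = ((V.card + s).factorial * (M - V.card).factorial : ℝ) / n.factorial * c := by
      intro V hV
      rw [mem_powerset] at hV
      have hdisj : Disjoint V B := sdiff_disjoint.mono_left hV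
      have hcard : (V ∪ B).card = V.card + s := by
        rw [card_union_of_disjoint hdisj, hcardB]
      have hVM : V.card ≤ M := card_le_card hV
      have : n - (V.card + s) - 1 = M - V.card := by omega
      rw [hcard, this]
    rw [Finset.sum_congr rfl hVcard, sum_powerset_apply_card
      (f := fun k => ((k + s).factorial * (M - k).factorial : ℝ) / n.factorial * c)]
    have hkey := key_nat M s
    have hkeyR : ((s : ℝ) + 1) *
        (∑ k ∈ range (M + 1), (M.choose k * ((k + s).factorial * (M - k).factorial) : ℝ))
          = ((M + s + 1).factorial : ℝ) := by
      push_cast [← Nat.cast_sum]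
      exact_mod_cast congrArg (Nat.cast : ℕ → ℝ) hkey
    have hfac : ((n.factorial : ℝ)) ≠ 0 := Nat.cast_ne_zero.2 n.factorial_ne_zero
    have hs1 : ((s : ℝ) + 1) ≠ 0 := by positivity
    have hTs : (T.card : ℝ) = (s : ℝ) + 1 := by
      rw [hs]; push_cast [Nat.cast_sub htpos]; ring
    rw [hTs]
    have lhs_eq : ∑ k ∈ range (M + 1),
        M.choose k • (((k + s).factorial * (M - k).factorial : ℝ) / n.factorial * c)
          = (∑ k ∈ range (M + 1),
              (M.choose k * ((k + s).factorial * (M - k).factorial) : ℝ)) / n.factorial * c := by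
      rw [Finset.sum_div, Finset.sum_mul]
      refine Finset.sum_congr rfl fun k _ => ?_
      rw [nsmul_eq_mul]; ring
    rw [lhs_eq]
    have hnfac : (n.factorial : ℝ) = ((M + s + 1).factorial : ℝ) := by rw [hns]
    have hSig : (∑ k ∈ range (M + 1),
        (M.choose k * ((k + s).factorial * (M - k).factorial) : ℝ))
          = ((M + s + 1).factorial : ℝ) / ((s : ℝ) + 1) := by
      rw [eq_div_iff hs1]; linear_combination hkeyR
    rw [hSig, hnfac]
    have hfac' : (((M + s + 1).factorial : ℝ)) ≠ 0 := Nat.cast_ne_zero.2 (Nat.factorial_ne_zero _)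
    field_simp
  · rw [if_neg hi]
    unfold shapley una
    refine Finset.sum_eq_zero fun S _ => ?_
    simp only [subset_insert_iff_of_notMem hi, sub_self, mul_zero]


private def mob (δ : Finset ι → ℝ) (T : Finset ι) : ℝ :=
  ∑ R ∈ T.powerset, (-1 : ℝ) ^ (T.card - R.card) * δ R

private lemma neg_one_pow_sum (A : Finset ι) :
    ∑ V ∈ A.powerset, (-1 : ℝ) ^ V.card = if A = ∅ then 1 else 0 := by
  have h := Finset.sum_powerset_neg_one_pow_card (x := A)
  have : ((∑ V ∈ A.powerset, (-1 : ℤ) ^ V.card : ℤ) : ℝ)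
      = ∑ V ∈ A.powerset, (-1 : ℝ) ^ V.card := by push_cast; rfl
  rw [← this, h]
  split <;> norm_num

private lemma decomp (δ : Finset ι → ℝ) (S : Finset ι) :
    δ S = ∑ T ∈ (univ : Finset ι).powerset, una T (mob δ T) S := by
  have h1 : ∑ T ∈ (univ : Finset ι).powerset, una T (mob δ T) S
      = ∑ T ∈ S.powerset, mob δ T := by
    unfold una
    rw [← Finset.sum_filter]
    congr 1
    ext T
    simp [subset_univ]
  rw [h1]
  unfold mob
  rw [Finset.sum_comm' (s := S.powerset) (t := fun T => T.powerset)
    (t' := S.powerset) (s' := fun R => S.powerset.filter (fun T => R ⊆ T))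
    (by intro T R; simp only [mem_powerset, mem_filter]; constructor
        · rintro ⟨h1, h2⟩; exact ⟨⟨h1, h2⟩, h2.trans h1⟩
        · rintro ⟨⟨h1, h2⟩, _⟩; exact ⟨h1, h2⟩)]
  have h2 : ∀ R ∈ S.powerset,
      ∑ T ∈ S.powerset.filter (fun T => R ⊆ T), (-1 : ℝ) ^ (T.card - R.card) * δ R
        = if R = S then δ R else 0 := by
    intro R hR
    rw [mem_powerset] at hR
    rw [sum_between R S hR (fun T => (-1 : ℝ) ^ (T.card - R.card) * δ R)]
    have h3 : ∀ V ∈ (S \ R).powerset,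
        (-1 : ℝ) ^ ((V ∪ R).card - R.card) * δ R = (-1 : ℝ) ^ V.card * δ R := by
      intro V hV
      rw [mem_powerset] at hV
      have hdisj : Disjoint V R := sdiff_disjoint.mono_left hV
      rw [card_union_of_disjoint hdisj, Nat.add_sub_cancel]
    rw [Finset.sum_congr rfl h3, ← Finset.sum_mul, neg_one_pow_sum]
    have h4 : S \ R = ∅ ↔ R = S := by
      rw [sdiff_eq_empty_iff_subset]
      exact ⟨fun h => subset_antisymm hR h, fun h => h ▸ Subset.rfl⟩
    by_cases h : R = S
    · rw [if_pos h, if_pos (h4.2 h), one_mul]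
    · rw [if_neg h, if_neg (fun he => h (h4.1 he)), zero_mul]
  rw [Finset.sum_congr rfl h2, Finset.sum_ite_eq' S.powerset S δ,
    if_pos (mem_powerset_self S)]

private lemma shapley_sum {α : Type*} (A : Finset α) (g : α → Finset ι → ℝ) (i : ι) :
    shapley (fun S => ∑ a ∈ A, g a S) i = ∑ a ∈ A, shapley (g a) i := by
  unfold shapley
  rw [Finset.sum_comm]
  refine Finset.sum_congr rfl fun S _ => ?_
  rw [← Finset.sum_sub_distrib, Finset.mul_sum]

private lemma phi_una
    (Φ : (Finset ι → ℝ) → ι → ℝ)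
    (heff : ∀ δ : Finset ι → ℝ, δ ∅ = 0 → ∑ i, Φ δ i = δ Finset.univ)
    (hnull : ∀ δ : Finset ι → ℝ, δ ∅ = 0 → ∀ i : ι,
      (∀ S : Finset ι, i ∉ S → δ (insert i S) = δ S) → Φ δ i = 0)
    (hsym : ∀ δ : Finset ι → ℝ, δ ∅ = 0 → ∀ i j : ι,
      (∀ S : Finset ι, i ∉ S → j ∉ S → δ (insert i S) = δ (insert j S)) →
      Φ δ i = Φ δ j)
    (T : Finset ι) (c : ℝ) (hc : T = ∅ → c = 0) (i : ι) :
    Φ (una T c) i = if i ∈ T then c / T.card else 0 := by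
  have h0 : una T c ∅ = 0 := by
    unfold una
    split
    · exact hc (subset_empty.1 (by assumption))
    · rfl
  have hnl : ∀ j : ι, j ∉ T → Φ (una T c) j = 0 := by
    intro j hj
    refine hnull _ h0 j fun S _ => ?_
    unfold una
    simp only [subset_insert_iff_of_notMem hj]
  by_cases hi : i ∈ T
  · rw [if_pos hi]
    have hTne : T.Nonempty := ⟨i, hi⟩
    have hsame : ∀ j ∈ T, Φ (una T c) j = Φ (una T c) i := by
      intro j hj
      by_cases hji : j = i
      · rw [hji]
      · refine hsym _ h0 j i fun S hjS hiS => ?_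
        unfold una
        rw [if_neg fun h => hiS ((mem_insert.1 (h hi)).resolve_left
          fun he => (hji he.symm).elim), if_neg fun h => hjS ((mem_insert.1 (h hj)).resolve_left
          fun he => (hji he).elim)]
    have heq : ∑ j, Φ (una T c) j = T.card * Φ (una T c) i := by
      rw [← Finset.sum_subset (subset_univ T) (fun j _ hj => hnl j hj),
        Finset.sum_congr rfl hsame, Finset.sum_const, nsmul_eq_mul]
    have heffT := heff (una T c) h0
    have huniv : una T c univ = c := if_pos (subset_univ T)
    rw [heq, huniv] at heffT
    have : (T.card : ℝ) ≠ 0 := Nat.cast_ne_zero.2 (card_pos.2 hTne).ne'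
    field_simp
    linarith [heffT]
  · rw [if_neg hi]
    exact hnl i hi

private lemma phi_sum
    (Φ : (Finset ι → ℝ) → ι → ℝ)
    (hnull : ∀ δ : Finset ι → ℝ, δ ∅ = 0 → ∀ i : ι,
      (∀ S : Finset ι, i ∉ S → δ (insert i S) = δ S) → Φ δ i = 0)
    (hadd : ∀ δ γ : Finset ι → ℝ, δ ∅ = 0 → γ ∅ = 0 → ∀ i : ι,
      Φ (fun S => δ S + γ S) i = Φ δ i + Φ γ i)
    {α : Type*} (A : Finset α) (g : α → Finset ι → ℝ) (h0 : ∀ a ∈ A, g a ∅ = 0) (i : ι) :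
    Φ (fun S => ∑ a ∈ A, g a S) i = ∑ a ∈ A, Φ (g a) i := by
  classical
  induction A using Finset.induction_on with
  | empty =>
    have : (fun S : Finset ι => ∑ a ∈ (∅ : Finset α), g a S) = fun _ => (0 : ℝ) := by
      funext S; simp
    rw [this, Finset.sum_empty]
    exact hnull _ rfl i fun S _ => rfl
  | insert a A ha ih =>
    have hfun : (fun S : Finset ι => ∑ x ∈ insert a A, g x S)
        = fun S => g a S + ∑ x ∈ A, g x S := by
      funext S; rw [Finset.sum_insert ha]
    have hA0 : (fun S : Finset ι => ∑ x ∈ A, g x S) ∅ = 0 :=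
      Finset.sum_eq_zero fun x hx => h0 x (mem_insert_of_mem hx)
    rw [hfun, hadd _ _ (h0 a (mem_insert_self a A)) hA0,
      ih (fun x hx => h0 x (mem_insert_of_mem hx)), Finset.sum_insert ha]

end main

theorem shapley_unique {ι : Type*} [Fintype ι] [DecidableEq ι]
    (Φ : (Finset ι → ℝ) → ι → ℝ)
    (heff : ∀ δ : Finset ι → ℝ, δ ∅ = 0 → ∑ i, Φ δ i = δ Finset.univ)
    (hnull : ∀ δ : Finset ι → ℝ, δ ∅ = 0 → ∀ i : ι,
      (∀ S : Finset ι, i ∉ S → δ (insert i S) = δ S) → Φ δ i = 0)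
    (hsym : ∀ δ : Finset ι → ℝ, δ ∅ = 0 → ∀ i j : ι,
      (∀ S : Finset ι, i ∉ S → j ∉ S → δ (insert i S) = δ (insert j S)) →
      Φ δ i = Φ δ j)
    (hadd : ∀ δ γ : Finset ι → ℝ, δ ∅ = 0 → γ ∅ = 0 → ∀ i : ι,
      Φ (fun S => δ S + γ S) i = Φ δ i + Φ γ i) :
    ∀ δ : Finset ι → ℝ, δ ∅ = 0 → ∀ i : ι, Φ δ i = shapley δ i := by
  intro δ hδ i
  have hdec : δ = fun S => ∑ T ∈ (univ : Finset ι).powerset, una T (mob δ T) S :=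
    funext (decomp δ)
  have hc : ∀ T : Finset ι, T = ∅ → mob δ T = 0 := by
    intro T hT
    subst hT
    simp [mob, hδ]
  have h0 : ∀ T ∈ (univ : Finset ι).powerset, una T (mob δ T) ∅ = 0 := by
    intro T _
    unfold una
    split
    · exact hc T (subset_empty.1 (by assumption))
    · rfl
  calc Φ δ i = Φ (fun S => ∑ T ∈ (univ : Finset ι).powerset, una T (mob δ T) S) i := by
        conv_lhs => rw [hdec]
    _ = ∑ T ∈ (univ : Finset ι).powerset, Φ (una T (mob δ T)) i :=
        phi_sum Φ hnull hadd _ _ h0 i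
    _ = ∑ T ∈ (univ : Finset ι).powerset, shapley (una T (mob δ T)) i := by
        refine Finset.sum_congr rfl fun T _ => ?_
        rw [phi_una Φ heff hnull hsym T (mob δ T) (hc T) i, shapley_una]
    _ = shapley (fun S => ∑ T ∈ (univ : Finset ι).powerset, una T (mob δ T) S) i :=
        (shapley_sum _ _ i).symm
    _ = shapley δ i := by conv_rhs => rw [hdec]
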